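/- (Refined Kauffman–Murasugi–Thistlethwaite inequality, abstract form.) Let f be a loop-count function on states of n crossings and let ⟨f⟩ := Σ_s w(s) be the sum of the weights over all states s : Fin n → Bool. Then span ⟨f⟩ ≤ 2n + 2(f(s_A) + f(s_B)) − 4. (In diagram language, with c(D) = n and Euler characteristic χ(D) = f(s_A) + f(s_B) − n of the Turaev surface, this reads span⟨D⟩ ≤ 4c(D) + 2(χ(D) − 2).) -/

import Mathlib

open LaurentPolynomial

/-- Maximal degree (max of the support), with convention `odeg 0 = 0`. -/
noncomputable def odeg (g : LaurentPolynomial ℤ) : ℤ := WithBot.unbotD 0 g.coeff.support.max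

/-- Minimal degree (min of the support), with convention `udeg 0 = 0`. -/
noncomputable def udeg (g : LaurentPolynomial ℤ) : ℤ := WithTop.untopD 0 g.coeff.support.min

/-- The span of a Laurent polynomial. -/
noncomputable def lspan (g : LaurentPolynomial ℤ) : ℤ := odeg g - udeg g

/-- Number of crossings spliced by an A-splice in the state `s`. -/
def alpha {n : ℕ} (s : Fin n → Bool) : ℕ :=
  (Finset.univ.filter (fun i => s i = false)).card

/-- Number of crossings spliced by a B-splice in the state `s`. -/
def beta {n : ℕ} (s : Fin n → Bool) : ℕ :=
  (Finset.univ.filter (fun i => s i = true)).card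

/-- A loop-count function: at least one loop in every state, and changing the
splice at one crossing changes the number of loops by at most one. -/
def IsLoopCount {n : ℕ} (f : (Fin n → Bool) → ℕ) : Prop :=
  (∀ s, 1 ≤ f s) ∧
    ∀ (s : Fin n → Bool) (i : Fin n),
      |(f (Function.update s i (!(s i))) : ℤ) - (f s : ℤ)| ≤ 1

/-- The weight `A^(α(s)-β(s)) * (-A^2 - A^(-2))^(f(s)-1)` of a state `s`. -/
noncomputable def weight {n : ℕ} (f : (Fin n → Bool) → ℕ) (s : Fin n → Bool) :
    LaurentPolynomial ℤ :=
  T ((alpha s : ℤ) - (beta s : ℤ)) * (-T 2 - T (-2)) ^ (f s - 1)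

/-- The Kauffman bracket of a loop-count function: the sum of the weights. -/
noncomputable def bracket {n : ℕ} (f : (Fin n → Bool) → ℕ) : LaurentPolynomial ℤ :=
  ∑ s : Fin n → Bool, weight f s
lemma support_TT' : ((-T 2 - T (-2) : LaurentPolynomial ℤ)).coeff.support ⊆ ({2, -2} : Finset ℤ) := by
  rw [AddMonoidAlgebra.coeff_sub]
  apply Finsupp.support_sub.trans
  apply Finset.union_subset
  · rw [AddMonoidAlgebra.coeff_neg, Finsupp.support_neg]
    exact (Finsupp.support_single_subset).trans (by simp)
  · exact (Finsupp.support_single_subset).trans (by simp)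

lemma support_pow' (k : ℕ) :
    ((-T 2 - T (-2) : LaurentPolynomial ℤ) ^ k).coeff.support ⊆ Finset.Icc (-(2*k : ℤ)) (2*k) := by
  induction k with
  | zero =>
      rw [pow_zero, AddMonoidAlgebra.one_def]
      exact (Finsupp.support_single_subset).trans (by simp)
  | succ k ih =>
      intro x hx
      rw [pow_succ] at hx
      have h := AddMonoidAlgebra.support_coeff_mul_subset _ _ hx
      rw [Finset.mem_add] at h
      obtain ⟨y, hy, z, hz, rfl⟩ := h
      have hy' := ih hy
      have hz' := support_TT' hz
      simp only [Finset.mem_Icc] at hy' ⊢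
      simp only [Finset.mem_insert, Finset.mem_singleton] at hz'
      push_cast
      rcases hz' with rfl | rfl <;> constructor <;> linarith [hy'.1, hy'.2]

lemma alpha_add_beta {n : ℕ} (s : Fin n → Bool) : alpha s + beta s = n := by
  classical
  have := Finset.card_filter_add_card_filter_not
    (s := (Finset.univ : Finset (Fin n))) (p := fun i => s i = false)
  simpa [alpha, beta, Finset.card_univ] using this

lemma beta_update_false {n : ℕ} (s : Fin n → Bool) (i : Fin n) (hi : s i = true) :
    beta (Function.update s i false) = beta s - 1 := by
  classical
  unfold beta
  have : (Finset.univ.filter (fun j => Function.update s i false j = true))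
      = (Finset.univ.filter (fun j => s j = true)).erase i := by
    ext j
    by_cases hj : j = i <;>
      simp [Function.update, hj, hi]
  rw [this, Finset.card_erase_of_mem (by simp [hi])]

lemma alpha_update_true {n : ℕ} (s : Fin n → Bool) (i : Fin n) (hi : s i = false) :
    alpha (Function.update s i true) = alpha s - 1 := by
  classical
  unfold alpha
  have : (Finset.univ.filter (fun j => Function.update s i true j = false))
      = (Finset.univ.filter (fun j => s j = false)).erase i := by
    ext j
    by_cases hj : j = i <;>
      simp [Function.update, hj, hi]
  rw [this, Finset.card_erase_of_mem (by simp [hi])]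

lemma f_le_A {n : ℕ} {f : (Fin n → Bool) → ℕ} (hf : IsLoopCount f) :
    ∀ (k : ℕ) (s : Fin n → Bool), beta s = k →
      (f s : ℤ) ≤ (f (fun _ => false) : ℤ) + beta s := by
  intro k
  induction k with
  | zero =>
      intro s hs
      have : s = fun _ => false := by
        funext j
        by_contra h
        have hj : s j = true := by
          cases hsj : s j
          · exact absurd hsj h
          · rfl
        have : j ∈ Finset.univ.filter (fun i => s i = true) := by simp [hj]
        rw [Finset.card_eq_zero.mp hs] at this
        simp at this
      rw [this]
      simp
  | succ k ih =>
      intro s hs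
      have hne : (Finset.univ.filter (fun i => s i = true)).Nonempty :=
        Finset.card_pos.mp (show 0 < beta s by omega)
      obtain ⟨i, hi⟩ := hne
      have hi' : s i = true := by simpa using hi
      set s' := Function.update s i false with hs'
      have hb : beta s' = k := by rw [hs', beta_update_false s i hi', hs]; omega
      have hflip := hf.2 s i
      rw [hi'] at hflip
      have : Function.update s i (!true) = s' := by rw [hs']; rfl
      rw [this] at hflip
      have h1 : (f s : ℤ) ≤ (f s' : ℤ) + 1 := by
        rw [abs_le] at hflip; linarith [hflip.1]
      have h2 := ih s' hb
      rw [hb] at h2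
      have : (beta s : ℤ) = k + 1 := by rw [hs]; push_cast; ring
      rw [this]
      linarith

lemma f_le_B {n : ℕ} {f : (Fin n → Bool) → ℕ} (hf : IsLoopCount f) :
    ∀ (k : ℕ) (s : Fin n → Bool), alpha s = k →
      (f s : ℤ) ≤ (f (fun _ => true) : ℤ) + alpha s := by
  intro k
  induction k with
  | zero =>
      intro s hs
      have : s = fun _ => true := by
        funext j
        by_contra h
        have hj : s j = false := by
          cases hsj : s j
          · rfl
          · exact absurd hsj h
        have : j ∈ Finset.univ.filter (fun i => s i = false) := by simp [hj]
        rw [Finset.card_eq_zero.mp hs] at this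
        simp at this
      rw [this]
      simp
  | succ k ih =>
      intro s hs
      have hne : (Finset.univ.filter (fun i => s i = false)).Nonempty :=
        Finset.card_pos.mp (show 0 < alpha s by omega)
      obtain ⟨i, hi⟩ := hne
      have hi' : s i = false := by simpa using hi
      set s' := Function.update s i true with hs'
      have hb : alpha s' = k := by rw [hs', alpha_update_true s i hi', hs]; omega
      have hflip := hf.2 s i
      rw [hi'] at hflip
      have : Function.update s i (!false) = s' := by rw [hs']; rfl
      rw [this] at hflip
      have h1 : (f s : ℤ) ≤ (f s' : ℤ) + 1 := by
        rw [abs_le] at hflip; linarith [hflip.1]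
      have h2 := ih s' hb
      rw [hb] at h2
      have : (alpha s : ℤ) = k + 1 := by rw [hs]; push_cast; ring
      rw [this]
      linarith

lemma weight_support_bound {n : ℕ} (f : (Fin n → Bool) → ℕ) (hf : IsLoopCount f)
    (s : Fin n → Bool) :
    ∀ x ∈ (weight f s).coeff.support,
      -(n : ℤ) - 2 * (f (fun _ => true) : ℤ) + 2 ≤ x ∧
        x ≤ (n : ℤ) + 2 * (f (fun _ => false) : ℤ) - 2 := by
  intro x hx
  unfold weight at hx
  have h := AddMonoidAlgebra.support_coeff_mul_subset _ _ hx
  rw [Finset.mem_add] at h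
  obtain ⟨y, hy, z, hz, rfl⟩ := h
  have hy' : y = (alpha s : ℤ) - (beta s : ℤ) := by
    have := Finsupp.support_single_subset hy
    simpa using this
  have hz' := support_pow' (f s - 1) hz
  rw [Finset.mem_Icc] at hz'
  have hab : (alpha s : ℤ) + (beta s : ℤ) = n := by
    have := alpha_add_beta s; exact_mod_cast congrArg (Nat.cast : ℕ → ℤ) this
  have hk : ((f s - 1 : ℕ) : ℤ) = (f s : ℤ) - 1 := by
    have := hf.1 s; omega
  have hA := f_le_A hf (beta s) s rfl
  have hB := f_le_B hf (alpha s) s rfl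
  rw [hk] at hz'
  subst hy'
  constructor
  · linarith [hz'.1]
  · linarith [hz'.2]

/-- Refined Kauffman–Murasugi–Thistlethwaite inequality, abstract form:
`span ⟨f⟩ ≤ 2n + 2(f(s_A) + f(s_B)) - 4`. -/
theorem lspan_bracket_le {n : ℕ} (f : (Fin n → Bool) → ℕ)
    (hf : IsLoopCount f) :
    lspan (bracket f) ≤
      2 * (n : ℤ) + 2 * ((f (fun _ => false) : ℤ) + (f (fun _ => true) : ℤ)) - 4 := by
  classical
  have h1 := hf.1 (fun _ => false)
  have h2 := hf.1 (fun _ => true)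
  have hn : (0 : ℤ) ≤ n := Int.natCast_nonneg n
  have hsupp : ∀ x ∈ (bracket f).coeff.support,
      -(n : ℤ) - 2 * (f (fun _ => true) : ℤ) + 2 ≤ x ∧
        x ≤ (n : ℤ) + 2 * (f (fun _ => false) : ℤ) - 2 := by
    intro x hx
    unfold bracket at hx
    rw [AddMonoidAlgebra.coeff_sum] at hx
    obtain ⟨s, -, hx'⟩ := Finsupp.mem_support_finsetSum _ hx
    exact weight_support_bound f hf s x hx'
  by_cases hb : bracket f = 0
  · rw [lspan, odeg, udeg, hb]
    simp only [AddMonoidAlgebra.coeff_zero, Finsupp.support_zero, Finset.max_empty, Finset.min_empty]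
    have h1' : (1 : ℤ) ≤ (f (fun _ => false) : ℤ) := by exact_mod_cast h1
    have h2' : (1 : ℤ) ≤ (f (fun _ => true) : ℤ) := by exact_mod_cast h2
    simp only [WithBot.unbotD_bot, WithTop.untopD_top, sub_zero]
    linarith
  · have hS : (bracket f).coeff.support.Nonempty :=
      Finsupp.support_nonempty_iff.mpr (AddMonoidAlgebra.coeff_eq_zero.not.mpr hb)
    have hmax : odeg (bracket f) = (bracket f).coeff.support.max' hS := by
      rw [odeg, ← Finset.coe_max' hS]; rfl
    have hmin : udeg (bracket f) = (bracket f).coeff.support.min' hS := by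
      rw [udeg, ← Finset.coe_min' hS]; rfl
    have hu := hsupp _ (Finset.max'_mem _ hS)
    have hl := hsupp _ (Finset.min'_mem _ hS)
    rw [lspan, hmax, hmin]
    linarith [hu.2, hl.1]
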